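/- arXiv:nlin/0610045 — 4 statements merged into one kernel-verified Lean document; each statement's English description precedes it below -/
import Mathlib

section
/- Let f : ℝ² → Mₙ(ℝ) be infinitely differentiable with f(x,y) invertible for every (x,y), and suppose f satisfies the matrix heat equation ∂_y f = ∂_x² f. Then φ := (∂_x f)·f⁻¹ satisfies the noncommutative Burgers equation ∂_y φ = ∂_x² φ + 2(∂_x φ)·φ. -/
attribute [local instance] Matrix.normedAddCommGroup Matrix.normedSpace

/-- Partial derivative in the `x`-direction of a function of two real variables. -/
noncomputable def pdx {E : Type*} [NormedAddCommGroup E] [NormedSpace ℝ E]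
    (f : ℝ × ℝ → E) : ℝ × ℝ → E :=
  fun p => fderiv ℝ f p (1, 0)

/-- Partial derivative in the `y`-direction of a function of two real variables. -/
noncomputable def pdy {E : Type*} [NormedAddCommGroup E] [NormedSpace ℝ E]
    (f : ℝ × ℝ → E) : ℝ × ℝ → E :=
  fun p => fderiv ℝ f p (0, 1)

section Aux

variable {E : Type*} [NormedAddCommGroup E] [NormedSpace ℝ E]

lemma BurgersAux.contDiff_pd (f : ℝ × ℝ → E) (hf : ContDiff ℝ (⊤ : ℕ∞) f) (v : ℝ × ℝ) :
    ContDiff ℝ (⊤ : ℕ∞) (fun p => fderiv ℝ f p v) := by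
  have hd : ContDiff ℝ (⊤ : ℕ∞) (fderiv ℝ f) := hf.fderiv_right (by norm_cast)
  exact (ContinuousLinearMap.apply ℝ E v).contDiff.comp hd

lemma BurgersAux.contDiff_pdx (f : ℝ × ℝ → E) (hf : ContDiff ℝ (⊤ : ℕ∞) f) :
    ContDiff ℝ (⊤ : ℕ∞) (pdx f) :=
  BurgersAux.contDiff_pd f hf (1, 0)

lemma BurgersAux.pd_interchange (f : ℝ × ℝ → E) (hf : ContDiff ℝ (⊤ : ℕ∞) f) (p : ℝ × ℝ)
    (v w : ℝ × ℝ) :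
    fderiv ℝ (fun q => fderiv ℝ f q v) p w = fderiv ℝ (fun q => fderiv ℝ f q w) p v := by
  have hder : ContDiff ℝ (⊤ : ℕ∞) (fderiv ℝ f) := hf.fderiv_right (by norm_cast)
  have hsym : IsSymmSndFDerivAt ℝ f p :=
    hf.contDiffAt.isSymmSndFDerivAt (by rw [minSmoothness_of_isRCLikeNormedField]; norm_cast)
  have key : ∀ v w : ℝ × ℝ,
      fderiv ℝ (fun q => fderiv ℝ f q v) p w = fderiv ℝ (fderiv ℝ f) p w v := by
    intro v w
    have h1 : (fun q => fderiv ℝ f q v)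
        = (ContinuousLinearMap.apply ℝ E v) ∘ (fderiv ℝ f) := rfl
    rw [h1, fderiv_comp p (ContinuousLinearMap.apply ℝ E v).differentiableAt
      ((hder.differentiable (by norm_cast)) p)]
    simp
  rw [key v w, key w v, hsym w v]

/-- Interchange of partial derivatives for a smooth function. -/
lemma BurgersAux.pdy_pdx (f : ℝ × ℝ → E) (hf : ContDiff ℝ (⊤ : ℕ∞) f) (p : ℝ × ℝ) :
    pdy (pdx f) p = pdx (pdy f) p :=
  BurgersAux.pd_interchange f hf p (1, 0) (0, 1)

end Aux

section MatrixAux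

variable {n : ℕ}

/-- The algebra of square matrices, as continuous linear endomorphisms of `Fin n → ℝ`. -/
noncomputable def BurgersAux.matCLM (n : ℕ) :
    Matrix (Fin n) (Fin n) ℝ ≃ₗ[ℝ] ((Fin n → ℝ) →L[ℝ] (Fin n → ℝ)) :=
  (Matrix.toLinAlgEquiv' :
      Matrix (Fin n) (Fin n) ℝ ≃ₐ[ℝ] ((Fin n → ℝ) →ₗ[ℝ] (Fin n → ℝ))).toLinearEquiv.trans
    LinearMap.toContinuousLinearMap

namespace BurgersAux

lemma matCLM_mul (a b : Matrix (Fin n) (Fin n) ℝ) :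
    matCLM n (a * b) = matCLM n a * matCLM n b := by
  ext x
  simp [matCLM, Matrix.mulVec_mulVec]

lemma matCLM_one : matCLM n (1 : Matrix (Fin n) (Fin n) ℝ) = 1 := by
  ext x; simp [matCLM]

/-- The image of a unit under `matCLM`, as a unit. -/
noncomputable def matCLMUnit {a : Matrix (Fin n) (Fin n) ℝ} (ha : IsUnit a) :
    ((Fin n → ℝ) →L[ℝ] (Fin n → ℝ))ˣ where
  val := matCLM n a
  inv := matCLM n ↑ha.unit⁻¹
  val_inv := by rw [← matCLM_mul, ha.mul_val_inv, matCLM_one]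
  inv_val := by rw [← matCLM_mul, ha.val_inv_mul, matCLM_one]

lemma matCLM_ring_inverse {a : Matrix (Fin n) (Fin n) ℝ} (ha : IsUnit a) :
    Ring.inverse (matCLM n a) = matCLM n a⁻¹ := by
  have h := Ring.inverse_unit (matCLMUnit ha)
  have h2 : ((matCLMUnit ha)⁻¹ : _) = matCLM n ↑ha.unit⁻¹ := rfl
  rw [h2] at h
  rw [show ((matCLMUnit ha : _) : (Fin n → ℝ) →L[ℝ] (Fin n → ℝ)) = matCLM n a from rfl] at h
  rw [h, Matrix.coe_units_inv, ha.unit_spec]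

lemma contDiff_matCLM : ContDiff ℝ (⊤ : ℕ∞) (matCLM n) := by
  exact (LinearMap.toContinuousLinearMap (matCLM n).toLinearMap).contDiff

lemma contDiff_matCLM_symm : ContDiff ℝ (⊤ : ℕ∞) (matCLM n).symm := by
  exact (LinearMap.toContinuousLinearMap (matCLM n).symm.toLinearMap).contDiff

/-- Smoothness of the pointwise inverse of a smooth family of invertible matrices. -/
lemma contDiff_inv_comp (f : ℝ × ℝ → Matrix (Fin n) (Fin n) ℝ)
    (hf : ContDiff ℝ (⊤ : ℕ∞) f)
    (hinv : ∀ p, IsUnit (f p)) : ContDiff ℝ (⊤ : ℕ∞) (fun q => (f q)⁻¹) := by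
  have hrepr : (fun q => (f q)⁻¹)
      = fun q => (matCLM n).symm (Ring.inverse (matCLM n (f q))) := by
    funext q
    rw [matCLM_ring_inverse (hinv q), LinearEquiv.symm_apply_apply]
  rw [hrepr, contDiff_iff_contDiffAt]
  intro q
  have h1 : ContDiffAt ℝ (⊤ : ℕ∞) (fun q => matCLM n (f q)) q :=
    (contDiff_matCLM.comp hf).contDiffAt
  have h2 : ContDiffAt ℝ (⊤ : ℕ∞) Ring.inverse (matCLM n (f q)) :=
    contDiffAt_ringInverse ℝ (matCLMUnit (hinv q))
  exact contDiff_matCLM_symm.contDiffAt.comp q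
    (show ContDiffAt ℝ (⊤ : ℕ∞) (fun q => Ring.inverse (matCLM n (f q))) q from ContDiffAt.comp (g := Ring.inverse) q h2 h1)

/-- Matrix multiplication as a continuous bilinear map. -/
noncomputable def mulL (n : ℕ) :
    Matrix (Fin n) (Fin n) ℝ →L[ℝ] Matrix (Fin n) (Fin n) ℝ →L[ℝ] Matrix (Fin n) (Fin n) ℝ :=
  LinearMap.toContinuousLinearMap
    (((LinearMap.toContinuousLinearMap :
        (Matrix (Fin n) (Fin n) ℝ →ₗ[ℝ] Matrix (Fin n) (Fin n) ℝ) ≃ₗ[ℝ]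
          (Matrix (Fin n) (Fin n) ℝ →L[ℝ] Matrix (Fin n) (Fin n) ℝ)) :
        (Matrix (Fin n) (Fin n) ℝ →ₗ[ℝ] Matrix (Fin n) (Fin n) ℝ) →ₗ[ℝ]
          (Matrix (Fin n) (Fin n) ℝ →L[ℝ] Matrix (Fin n) (Fin n) ℝ)).comp
      (LinearMap.mul ℝ (Matrix (Fin n) (Fin n) ℝ)))

@[simp] lemma mulL_apply (a b : Matrix (Fin n) (Fin n) ℝ) : mulL n a b = a * b := rfl

variable {a b : ℝ × ℝ → Matrix (Fin n) (Fin n) ℝ}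

/-- Smoothness of pointwise products. -/
lemma contDiff_mul2 (ha : ContDiff ℝ (⊤ : ℕ∞) a) (hb : ContDiff ℝ (⊤ : ℕ∞) b) :
    ContDiff ℝ (⊤ : ℕ∞) (fun q => a q * b q) :=
  ((mulL n).isBoundedBilinearMap.contDiff).comp (ha.prodMk hb)

/-- Leibniz rule for directional partial derivatives of matrix products. -/
lemma pd_mul (ha : ContDiff ℝ (⊤ : ℕ∞) a) (hb : ContDiff ℝ (⊤ : ℕ∞) b)
    (p : ℝ × ℝ) (v : ℝ × ℝ) :
    fderiv ℝ (fun q => a q * b q) p v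
      = fderiv ℝ a p v * b p + a p * fderiv ℝ b p v := by
  have Ha : HasFDerivAt a (fderiv ℝ a p) p :=
    ((ha.differentiable (by norm_cast)) p).hasFDerivAt
  have Hb : HasFDerivAt b (fderiv ℝ b p) p :=
    ((hb.differentiable (by norm_cast)) p).hasFDerivAt
  have H := ((mulL n).hasFDerivAt_of_bilinear Ha Hb).fderiv
  rw [show (fun q => a q * b q) = (fun q => mulL n (a q) (b q)) from rfl]
  erw [H]
  change (mulL n) (a p) (fderiv ℝ b p v) + (mulL n) (fderiv ℝ a p v) (b p) = _
  simp only [mulL_apply]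
  exact add_comm _ _

lemma pdx_mul (ha : ContDiff ℝ (⊤ : ℕ∞) a) (hb : ContDiff ℝ (⊤ : ℕ∞) b) (p : ℝ × ℝ) :
    pdx (fun q => a q * b q) p = pdx a p * b p + a p * pdx b p :=
  pd_mul ha hb p (1, 0)

lemma pdy_mul (ha : ContDiff ℝ (⊤ : ℕ∞) a) (hb : ContDiff ℝ (⊤ : ℕ∞) b) (p : ℝ × ℝ) :
    pdy (fun q => a q * b q) p = pdy a p * b p + a p * pdy b p :=
  pd_mul ha hb p (0, 1)

lemma pdx_add (ha : ContDiff ℝ (⊤ : ℕ∞) a) (hb : ContDiff ℝ (⊤ : ℕ∞) b) (p : ℝ × ℝ) :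
    pdx (fun q => a q + b q) p = pdx a p + pdx b p := by
  have := fderiv_fun_add (𝕜 := ℝ) ((ha.differentiable (by norm_cast)) p)
    ((hb.differentiable (by norm_cast)) p)
  show fderiv ℝ (fun q => a q + b q) p (1, 0) = _
  erw [this]; rfl

lemma pdx_neg (p : ℝ × ℝ) :
    pdx (fun q => -(a q)) p = -(pdx a p) := by
  show fderiv ℝ (fun q => -(a q)) p (1, 0) = _
  erw [fderiv_fun_neg]; rfl

end BurgersAux

end MatrixAux

open BurgersAux in
/-- Cole–Hopf: a smooth invertible solution `f` of the matrix heat equation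
`f_y = f_xx` gives a solution `φ = f_x f⁻¹` of the noncommutative Burgers
equation `φ_y = φ_xx + 2 φ_x φ`. -/
theorem burgers_of_heat (n : ℕ) (f : ℝ × ℝ → Matrix (Fin n) (Fin n) ℝ)
    (hf : ContDiff ℝ (⊤ : ℕ∞) f)
    (hinv : ∀ p, IsUnit (f p))
    (hheat : ∀ p, pdy f p = pdx (pdx f) p)
    (φ : ℝ × ℝ → Matrix (Fin n) (Fin n) ℝ)
    (hφ : ∀ p, φ p = pdx f p * (f p)⁻¹) :
    ∀ p, pdy φ p = pdx (pdx φ) p + 2 • (pdx φ p * φ p) := by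
  intro p
  set g : ℝ × ℝ → Matrix (Fin n) (Fin n) ℝ := fun q => (f q)⁻¹ with hgdef
  have hg : ContDiff ℝ (⊤ : ℕ∞) g := contDiff_inv_comp f hf hinv
  set f1 := pdx f with hf1def
  set f2 := pdx f1 with hf2def
  set f3 := pdx f2 with hf3def
  have hf1 : ContDiff ℝ (⊤ : ℕ∞) f1 := contDiff_pdx f hf
  have hf2 : ContDiff ℝ (⊤ : ℕ∞) f2 := contDiff_pdx f1 hf1
  have hfg : ∀ q, f q * g q = 1 := fun q =>
    Matrix.mul_nonsing_inv _ ((Matrix.isUnit_iff_isUnit_det _).mp (hinv q))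
  have hgf : ∀ q, g q * f q = 1 := fun q =>
    Matrix.nonsing_inv_mul _ ((Matrix.isUnit_iff_isUnit_det _).mp (hinv q))
  -- derivative of the inverse
  have hginv : ∀ v : ℝ × ℝ, ∀ q, fderiv ℝ g q v = -(g q * fderiv ℝ f q v * g q) := by
    intro v q
    have hzero : fderiv ℝ (fun r => f r * g r) q v = 0 := by
      have hone : (fun r => f r * g r) = fun _ => (1 : Matrix (Fin n) (Fin n) ℝ) :=
        funext hfg
      rw [hone, fderiv_fun_const]
      rfl
    rw [pd_mul hf hg q v] at hzero
    have h2 : f q * fderiv ℝ g q v = -(fderiv ℝ f q v * g q) :=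
      eq_neg_of_add_eq_zero_right hzero
    calc fderiv ℝ g q v = (g q * f q) * fderiv ℝ g q v := by rw [hgf q, one_mul]
      _ = g q * (f q * fderiv ℝ g q v) := by rw [mul_assoc]
      _ = g q * -(fderiv ℝ f q v * g q) := by rw [h2]
      _ = -(g q * fderiv ℝ f q v * g q) := by
          rw [mul_neg, mul_assoc]
  have hgx : ∀ q, pdx g q = -(g q * f1 q * g q) := fun q => hginv (1, 0) q
  have hgy : ∀ q, pdy g q = -(g q * f2 q * g q) := by
    intro q
    have := hginv (0, 1) q
    rw [show fderiv ℝ f q (0, 1) = pdy f q from rfl] at this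
    rw [hheat q] at this
    exact this
  have hgxs : ContDiff ℝ (⊤ : ℕ∞) (pdx g) := contDiff_pdx g hg
  have hgxfun : pdx g = fun q => -(g q * f1 q * g q) := funext hgx
  -- φ as a product
  have hφfun : φ = fun q => f1 q * g q := funext hφ
  -- second x-derivative of g
  have hgfs : ContDiff ℝ (⊤ : ℕ∞) (fun q => g q * f1 q) := contDiff_mul2 hg hf1
  have hgxx : pdx (pdx g) p
      = -((pdx g p * f1 p + g p * f2 p) * g p + (g p * f1 p) * pdx g p) := by
    conv_lhs => rw [hgxfun]
    rw [pdx_neg, pdx_mul hgfs hg, pdx_mul hg hf1]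
  -- first derivatives of φ
  have hφx : ∀ q, pdx φ q = f2 q * g q + f1 q * pdx g q := by
    intro q
    rw [hφfun]
    exact pdx_mul hf1 hg q
  have hφy : pdy φ p = f3 p * g p + f1 p * pdy g p := by
    rw [hφfun, pdy_mul hf1 hg p]
    congr 1
    have h1 : pdy f1 p = pdx (pdy f) p := pdy_pdx f hf p
    have h2 : pdy f = f2 := funext hheat
    rw [h1, h2]
  -- second x-derivative of φ
  have hφxfun : pdx φ = fun q => f2 q * g q + f1 q * pdx g q := funext hφx
  have hφxx : pdx (pdx φ) p
      = (f3 p * g p + f2 p * pdx g p) + (f2 p * pdx g p + f1 p * pdx (pdx g) p) := by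
    rw [hφxfun, pdx_add (contDiff_mul2 hf2 hg) (contDiff_mul2 hf1 hgxs),
      pdx_mul hf2 hg, pdx_mul hf1 hgxs]
  -- assemble
  rw [hφy, hgy p, hφxx, hgxx, hφx p, hφfun, hgx p]
  noncomm_ring
end

section
/- Let f : ℝ² → Mₙ(ℝ) be infinitely differentiable with f(x,y) invertible for every (x,y), and suppose g := f⁻¹ satisfies ∂_y g = −∂_x² g. Then φ := −(∂_x f)·f⁻¹ satisfies the first equation of the opposite noncommutative Burgers hierarchy, φ_y = −φ_xx − 2φ φ_x. -/
attribute [local instance] Matrix.normedAddCommGroup Matrix.normedSpace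

namespace OppBurgersAux

variable {n : ℕ}

local notation "M" => Matrix (Fin n) (Fin n) ℝ

noncomputable instance : NormedAddCommGroup (ℝ × ℝ →L[ℝ] M) :=
  ContinuousLinearMap.toNormedAddCommGroup

noncomputable instance : NormedSpace ℝ (ℝ × ℝ →L[ℝ] M) :=
  ContinuousLinearMap.toNormedSpace

/-- Matrix multiplication as a continuous bilinear map. -/
noncomputable def mulB (n : ℕ) :
    Matrix (Fin n) (Fin n) ℝ →L[ℝ] Matrix (Fin n) (Fin n) ℝ →L[ℝ] Matrix (Fin n) (Fin n) ℝ :=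
  LinearMap.toContinuousLinearMap
    { toFun := fun A => LinearMap.toContinuousLinearMap
        { toFun := fun B => A * B
          map_add' := fun B C => Matrix.mul_add A B C
          map_smul' := fun r B => (Matrix.mul_smul A r B) }
      map_add' := by
        intro A B; ext C; simp [Matrix.add_mul]
      map_smul' := by
        intro r A; ext C; simp [Matrix.smul_mul] }

@[simp] lemma mulB_apply (A B : M) : mulB n A B = A * B := by
  simp [mulB]

lemma contDiff_mul2 {A B : ℝ × ℝ → M} (hA : ContDiff ℝ (⊤ : ℕ∞) A)
    (hB : ContDiff ℝ (⊤ : ℕ∞) B) : ContDiff ℝ (⊤ : ℕ∞) (fun q => A q * B q) := by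
  have : (fun q => A q * B q) = fun q => mulB n (A q) (B q) := by
    funext q; simp
  rw [this]
  exact (((mulB n).contDiff).comp hA).clm_apply hB

lemma pdx_mul {A B : ℝ × ℝ → M} {p : ℝ × ℝ} (hA : DifferentiableAt ℝ A p)
    (hB : DifferentiableAt ℝ B p) :
    pdx (fun q => A q * B q) p = pdx A p * B p + A p * pdx B p := by
  have h2 : (fun q => A q * B q) = fun q => mulB n (A q) (B q) := by
    funext q; simp
  have h := (mulB n).fderiv_of_bilinear hA hB
  simp only [pdx, h2]
  erw [h]
  show mulB n (A p) (fderiv ℝ B p (1, 0)) + mulB n (fderiv ℝ A p (1, 0)) (B p) = _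
  simp only [ ContinuousLinearMap.add_apply, ContinuousLinearMap.precompR_apply,
    ContinuousLinearMap.precompL_apply, ContinuousLinearMap.compL_apply,
    ContinuousLinearMap.comp_apply, ContinuousLinearMap.coe_comp', Function.comp_apply,
    mulB_apply]
  exact add_comm _ _

lemma pdy_mul {A B : ℝ × ℝ → M} {p : ℝ × ℝ} (hA : DifferentiableAt ℝ A p)
    (hB : DifferentiableAt ℝ B p) :
    pdy (fun q => A q * B q) p = pdy A p * B p + A p * pdy B p := by
  have h2 : (fun q => A q * B q) = fun q => mulB n (A q) (B q) := by
    funext q; simp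
  have h := (mulB n).fderiv_of_bilinear hA hB
  simp only [pdy, h2]
  erw [h]
  show mulB n (A p) (fderiv ℝ B p (0, 1)) + mulB n (fderiv ℝ A p (0, 1)) (B p) = _
  simp only [ ContinuousLinearMap.add_apply, ContinuousLinearMap.precompR_apply,
    ContinuousLinearMap.precompL_apply, ContinuousLinearMap.compL_apply,
    ContinuousLinearMap.comp_apply, ContinuousLinearMap.coe_comp', Function.comp_apply,
    mulB_apply]
  exact add_comm _ _

lemma pdx_const {c : M} : pdx (fun _ : ℝ × ℝ => c) = fun _ => 0 := by
  funext p; simp [pdx]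

lemma pdx_neg {A : ℝ × ℝ → M} : pdx (fun q => -A q) = fun p => - pdx A p := by
  funext p; simp [pdx, fderiv_neg]

lemma pdx_add {A B : ℝ × ℝ → M} {p : ℝ × ℝ} (hA : DifferentiableAt ℝ A p)
    (hB : DifferentiableAt ℝ B p) :
    pdx (fun q => A q + B q) p = pdx A p + pdx B p := by
  simp [pdx, fderiv_fun_add hA hB]

lemma contDiff_pdx {A : ℝ × ℝ → M} (hA : ContDiff ℝ (⊤ : ℕ∞) A) :
    ContDiff ℝ (⊤ : ℕ∞) (pdx A) := by
  have h1 : ContDiff ℝ (⊤ : ℕ∞) (fderiv ℝ A) := hA.fderiv_right (m := ((⊤ : ℕ∞) : WithTop ℕ∞)) (by exact_mod_cast le_top)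
  exact h1.clm_apply contDiff_const

/-- Mixed partials commute for smooth functions. -/
lemma pdy_pdx_comm {A : ℝ × ℝ → M} (hA : ContDiff ℝ (⊤ : ℕ∞) A) (p : ℝ × ℝ) :
    pdy (pdx A) p = pdx (pdy A) p := by
  have hd : ContDiff ℝ (⊤ : ℕ∞) (fderiv ℝ A) := hA.fderiv_right (m := ((⊤ : ℕ∞) : WithTop ℕ∞)) (by exact_mod_cast le_top)
  have hdp : DifferentiableAt ℝ (fderiv ℝ A) p :=
    (hd.differentiable (by simp)).differentiableAt
  have hdiff : ∀ y, HasFDerivAt A (fderiv ℝ A y) y := fun y =>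
    ((hA.differentiable (by simp)) y).hasFDerivAt
  have hsymm := second_derivative_symmetric hdiff hdp.hasFDerivAt
  have e1 : pdy (pdx A) p = fderiv ℝ (fderiv ℝ A) p (0, 1) (1, 0) := by
    show fderiv ℝ (fun q => fderiv ℝ A q (1, 0)) p (0, 1) = _
    erw [fderiv_clm_apply hdp (differentiableAt_const _)]
    show fderiv ℝ A p (fderiv ℝ (fun _ : ℝ × ℝ => ((1 : ℝ), (0 : ℝ))) p (0, 1)) + fderiv ℝ (fderiv ℝ A) p (0, 1) (1, 0) = _
    simp
  have e2 : pdx (pdy A) p = fderiv ℝ (fderiv ℝ A) p (1, 0) (0, 1) := by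
    show fderiv ℝ (fun q => fderiv ℝ A q (0, 1)) p (1, 0) = _
    erw [fderiv_clm_apply hdp (differentiableAt_const _)]
    show fderiv ℝ A p (fderiv ℝ (fun _ : ℝ × ℝ => ((0 : ℝ), (1 : ℝ))) p (1, 0)) + fderiv ℝ (fderiv ℝ A) p (1, 0) (0, 1) = _
    simp
  rw [e1, e2]; exact hsymm _ _

/-- Entry evaluation as a continuous linear map. -/
noncomputable def entryCLM (n : ℕ) (i j : Fin n) : Matrix (Fin n) (Fin n) ℝ →L[ℝ] ℝ :=
  LinearMap.toContinuousLinearMap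
    { toFun := fun A => A i j
      map_add' := fun _ _ => rfl
      map_smul' := fun _ _ => rfl }

@[simp] lemma entryCLM_apply (i j : Fin n) (A : M) : entryCLM n i j A = A i j := by
  simp [entryCLM]
  rfl

lemma contDiff_det_comp {g : ℝ × ℝ → M}
    (hg : ∀ i j, ContDiff ℝ (⊤ : ℕ∞) (fun q => g q i j)) :
    ContDiff ℝ (⊤ : ℕ∞) (fun q => (g q).det) := by
  simp only [Matrix.det_apply']
  exact ContDiff.sum fun σ _ => contDiff_const.mul (contDiff_prod fun i _ => hg _ _)

/-- The matrix-to-pi continuous linear equivalence. -/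
noncomputable def toPiCLE (n : ℕ) :
    Matrix (Fin n) (Fin n) ℝ ≃L[ℝ] (Fin n → Fin n → ℝ) :=
  LinearEquiv.toContinuousLinearEquiv
    { toFun := fun A i j => A i j
      invFun := fun A => Matrix.of A
      map_add' := fun _ _ => rfl
      map_smul' := fun _ _ => rfl
      left_inv := fun _ => rfl
      right_inv := fun _ => rfl }

lemma contDiff_of_entries {g : ℝ × ℝ → M}
    (hg : ∀ i j, ContDiff ℝ (⊤ : ℕ∞) (fun q => g q i j)) :
    ContDiff ℝ (⊤ : ℕ∞) g := by
  rw [← (toPiCLE n).comp_contDiff_iff]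
  rw [contDiff_pi]
  intro i
  rw [contDiff_pi]
  intro j
  exact hg i j

/-- Smoothness of the pointwise inverse of a smooth everywhere-invertible
matrix-valued function. -/
lemma contDiff_inv_of_isUnit {f : ℝ × ℝ → M} (hf : ContDiff ℝ (⊤ : ℕ∞) f)
    (hinv : ∀ p, IsUnit (f p)) : ContDiff ℝ (⊤ : ℕ∞) (fun q => (f q)⁻¹) := by
  have hentry : ∀ i j, ContDiff ℝ (⊤ : ℕ∞) (fun q => f q i j) := fun i j =>
    ((entryCLM n i j).contDiff).comp hf
  have hdet : ContDiff ℝ (⊤ : ℕ∞) (fun q => (f q).det) := contDiff_det_comp hentry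
  have hd0 : ∀ p, (f p).det ≠ 0 := fun p =>
    ((Matrix.isUnit_iff_isUnit_det _).mp (hinv p)).ne_zero
  have hadj : ContDiff ℝ (⊤ : ℕ∞) (fun q => (f q).adjugate) := by
    apply contDiff_of_entries
    intro i j
    simp only [Matrix.adjugate_apply]
    apply contDiff_det_comp
    intro k l
    simp only [Matrix.updateRow_apply]
    by_cases h : k = j
    · simp only [h, if_true]
      exact contDiff_const
    · simp only [h, if_false]
      exact hentry k l
  have : (fun q => (f q)⁻¹) = fun q => ((f q).det)⁻¹ • (f q).adjugate := by
    funext q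
    rw [Matrix.inv_def, Ring.inverse_eq_inv']
  rw [this]
  exact (hdet.inv hd0).smul hadj

end OppBurgersAux

open OppBurgersAux in
/-- If `g = f⁻¹` satisfies the backward heat equation `g_y = -g_xx`, then
`φ = -f_x f⁻¹` satisfies the first equation of the opposite noncommutative
Burgers hierarchy, `φ_y = -φ_xx - 2 φ φ_x`. -/
theorem opposite_burgers_of_backward_heat (n : ℕ)
    (f : ℝ × ℝ → Matrix (Fin n) (Fin n) ℝ)
    (hf : ContDiff ℝ (⊤ : ℕ∞) f)
    (hinv : ∀ p, IsUnit (f p))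
    (hheat : ∀ p, pdy (fun q => (f q)⁻¹) p = - pdx (pdx (fun q => (f q)⁻¹)) p)
    (φ : ℝ × ℝ → Matrix (Fin n) (Fin n) ℝ)
    (hφ : ∀ p, φ p = - (pdx f p * (f p)⁻¹)) :
    ∀ p, pdy φ p = - pdx (pdx φ) p - 2 • (φ p * pdx φ p) := by
  classical
  have hgc : ContDiff ℝ (⊤ : ℕ∞) (fun q => (f q)⁻¹) := contDiff_inv_of_isUnit hf hinv
  set g : ℝ × ℝ → Matrix (Fin n) (Fin n) ℝ := fun q => (f q)⁻¹ with hgdef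
  have hg1c : ContDiff ℝ (⊤ : ℕ∞) (pdx g) := contDiff_pdx hgc
  have hg2c : ContDiff ℝ (⊤ : ℕ∞) (pdx (pdx g)) := contDiff_pdx hg1c
  have hF1c : ContDiff ℝ (⊤ : ℕ∞) (pdx f) := contDiff_pdx hf
  have diffAt : ∀ {A : ℝ × ℝ → Matrix (Fin n) (Fin n) ℝ}, ContDiff ℝ (⊤ : ℕ∞) A →
      ∀ p, DifferentiableAt ℝ A p := fun hA p =>
    (hA.differentiable (by simp)).differentiableAt
  -- f * g = 1 and g * f = 1
  have hdu : ∀ p, IsUnit (f p).det := fun p => (Matrix.isUnit_iff_isUnit_det _).mp (hinv p)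
  have hfg : ∀ q, f q * g q = 1 := fun q => Matrix.mul_nonsing_inv _ (hdu q)
  have hgf : ∀ q, g q * f q = 1 := fun q => Matrix.nonsing_inv_mul _ (hdu q)
  -- x-derivative of f*g = 1 gives  F1 * g + f * g1 = 0
  have hx0 : ∀ p, pdx f p * g p + f p * pdx g p = 0 := by
    intro p
    have h1 : pdx (fun q => f q * g q) p = pdx f p * g p + f p * pdx g p :=
      pdx_mul (diffAt hf p) (diffAt hgc p)
    have h2 : (fun q => f q * g q) = fun _ => (1 : Matrix (Fin n) (Fin n) ℝ) :=
      funext hfg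
    rw [h2] at h1
    rw [← h1, pdx_const]
  -- φ = f * g1
  have hφ2 : ∀ p, φ p = f p * pdx g p := by
    intro p
    have h3 : pdx f p * g p = -(f p * pdx g p) := by
      linear_combination (norm := noncomm_ring) hx0 p
    rw [hφ p]
    show -(pdx f p * g p) = f p * pdx g p
    rw [h3]; simp
  -- F1 = -(f * g1 * f)
  have hF1eq : ∀ p, pdx f p = -(f p * pdx g p * f p) := by
    intro p
    have h3 : pdx f p * g p = -(f p * pdx g p) := by
      linear_combination (norm := noncomm_ring) hx0 p
    calc pdx f p = pdx f p * (g p * f p) := by rw [hgf]; simp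
    _ = (pdx f p * g p) * f p := by noncomm_ring
    _ = -(f p * pdx g p * f p) := by rw [h3]; noncomm_ring
  -- pdy g = -g2, pdy g1 = -g3
  have hyg : pdy g = fun p => -(pdx (pdx g) p) := funext hheat
  have hyg1 : ∀ p, pdy (pdx g) p = -(pdx (pdx (pdx g)) p) := by
    intro p
    have h1 : pdy (pdx g) p = pdx (pdy g) p := pdy_pdx_comm hgc p
    have h2 : pdx (pdy g) p = pdx (fun q => -(pdx (pdx g) q)) p := by rw [hyg]
    have h3 : pdx (fun q => -(pdx (pdx g) q)) p = -(pdx (pdx (pdx g)) p) := by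
      rw [pdx_neg]
    rw [h1, h2, h3]
  -- y-derivative of f*g = 1 gives pdy f = f * g2 * f
  have hyf : ∀ p, pdy f p = f p * pdx (pdx g) p * f p := by
    intro p
    have h1 : pdy (fun q => f q * g q) p = pdy f p * g p + f p * pdy g p :=
      pdy_mul (diffAt hf p) (diffAt hgc p)
    have h2 : (fun q => f q * g q) = fun _ => (1 : Matrix (Fin n) (Fin n) ℝ) :=
      funext hfg
    rw [h2] at h1
    have h0 : pdy (fun _ : ℝ × ℝ => (1 : Matrix (Fin n) (Fin n) ℝ)) p = 0 := by
      simp [pdy]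
    rw [h0] at h1
    have hygp : pdy g p = -(pdx (pdx g) p) := hheat p
    rw [hygp] at h1
    have h3 : pdy f p * g p = f p * pdx (pdx g) p := by
      linear_combination (norm := noncomm_ring) -h1
    calc pdy f p = pdy f p * (g p * f p) := by rw [hgf]; simp
    _ = (pdy f p * g p) * f p := by noncomm_ring
    _ = f p * pdx (pdx g) p * f p := by rw [h3]
  -- pdx φ = F1 * g1 + f * g2
  have hφfun : φ = fun q => f q * pdx g q := funext hφ2
  have hxφ : ∀ p, pdx φ p = pdx f p * pdx g p + f p * pdx (pdx g) p := by
    intro p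
    rw [hφfun]
    exact pdx_mul (diffAt hf p) (diffAt hg1c p)
  -- pdx F1
  have hF1fun : pdx f = fun q => -(f q * pdx g q * f q) := funext hF1eq
  have hmul1 : ContDiff ℝ (⊤ : ℕ∞) (fun q => f q * pdx g q) := contDiff_mul2 hf hg1c
  have hxF1a : ∀ p, pdx (fun q => f q * pdx g q * f q) p =
      (pdx f p * pdx g p + f p * pdx (pdx g) p) * f p + (f p * pdx g p) * pdx f p := by
    intro p
    have hA : pdx (fun q => (fun r => f r * pdx g r) q * f q) p =
        pdx (fun r => f r * pdx g r) p * f p + (f p * pdx g p) * pdx f p :=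
      pdx_mul (diffAt hmul1 p) (diffAt hf p)
    have hB : pdx (fun r => f r * pdx g r) p = pdx f p * pdx g p + f p * pdx (pdx g) p :=
      pdx_mul (diffAt hf p) (diffAt hg1c p)
    rw [← hB]
    exact hA
  have hxF1 : ∀ p, pdx (pdx f) p =
      -((pdx f p * pdx g p + f p * pdx (pdx g) p) * f p + (f p * pdx g p) * pdx f p) := by
    intro p
    have h1 : pdx (pdx f) p = pdx (fun q => -((fun r => f r * pdx g r * f r) q)) p := by
      conv_lhs => rw [hF1fun]
    rw [h1, pdx_neg]
    simp only [hxF1a p]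
  -- pdx (pdx φ)
  have hxφfun : pdx φ = fun q => pdx f q * pdx g q + f q * pdx (pdx g) q := funext hxφ
  have hxxφ : ∀ p, pdx (pdx φ) p =
      (pdx (pdx f) p * pdx g p + pdx f p * pdx (pdx g) p)
        + (pdx f p * pdx (pdx g) p + f p * pdx (pdx (pdx g)) p) := by
    intro p
    have h1 : pdx (pdx φ) p =
        pdx (fun q => (fun r => pdx f r * pdx g r) q + (fun r => f r * pdx (pdx g) r) q) p := by
      conv_lhs => rw [hxφfun]
    rw [h1, pdx_add (diffAt (contDiff_mul2 hF1c hg1c) p) (diffAt (contDiff_mul2 hf hg2c) p)]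
    rw [pdx_mul (diffAt hF1c p) (diffAt hg1c p), pdx_mul (diffAt hf p) (diffAt hg2c p)]
  -- pdy φ
  have hyφ : ∀ p, pdy φ p =
      (f p * pdx (pdx g) p * f p) * pdx g p + f p * (-(pdx (pdx (pdx g)) p)) := by
    intro p
    rw [hφfun]
    rw [pdy_mul (diffAt hf p) (diffAt hg1c p)]
    rw [hyf p, hyg1 p]
  -- final assembly
  intro p
  rw [hyφ p, hxxφ p, hxφ p, hφ2 p, hxF1 p, hF1eq p, two_smul]
  noncomm_ring
end

section
/- Let Q be a constant N×M real matrix. Let X : ℝ² → (N×N real matrices) be infinitely differentiable with X(x,y) invertible for all (x,y), and Y : ℝ² → (M×N real matrices) infinitely differentiable, satisfying X_x = Q·Y, X_y = X_xx and Y_y = Y_xx. Then φ := Y·X⁻¹ satisfies the Burgers equation with product Q: φ_y = φ_xx + 2 φ_x Q φ. -/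
attribute [local instance] Matrix.normedAddCommGroup Matrix.normedSpace

section helpers
variable {a b c : Type*} [Fintype a] [Fintype b] [Fintype c]

noncomputable def mulCLM : Matrix a b ℝ →L[ℝ] Matrix b c ℝ →L[ℝ] Matrix a c ℝ :=
  LinearMap.toContinuousLinearMap <|
    (LinearMap.toContinuousLinearMap.toLinearMap).comp <|
      LinearMap.mk₂ ℝ (· * ·) Matrix.add_mul (fun t A B => Matrix.smul_mul t A B)
        Matrix.mul_add (fun t A B => Matrix.mul_smul A t B)

@[simp] theorem mulCLM_apply (A : Matrix a b ℝ) (B : Matrix b c ℝ) : mulCLM A B = A * B := by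
  simp [mulCLM]

theorem isBBM_mul : IsBoundedBilinearMap ℝ
    (fun p : Matrix a b ℝ × Matrix b c ℝ => p.1 * p.2) := by
  have := (mulCLM (a := a) (b := b) (c := c)).isBoundedBilinearMap
  exact this

theorem DifferentiableAt.matmul {f : ℝ × ℝ → Matrix a b ℝ} {g : ℝ × ℝ → Matrix b c ℝ}
    {p : ℝ × ℝ} (hf : DifferentiableAt ℝ f p) (hg : DifferentiableAt ℝ g p) :
    DifferentiableAt ℝ (fun q => f q * g q) p :=
  by have := ((isBBM_mul (a := a) (b := b) (c := c)).differentiableAt (f p, g p)).comp p (hf.prodMk hg); exact this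

theorem pd_mul {f : ℝ × ℝ → Matrix a b ℝ} {g : ℝ × ℝ → Matrix b c ℝ}
    {p : ℝ × ℝ} (hf : DifferentiableAt ℝ f p) (hg : DifferentiableAt ℝ g p) (v : ℝ × ℝ) :
    fderiv ℝ (fun q => f q * g q) p v
      = fderiv ℝ f p v * g p + f p * fderiv ℝ g p v := by
  have h : HasFDerivAt (fun q => f q * g q)
      ((((isBBM_mul (a := a) (b := b) (c := c)).deriv (f p, g p))).comp
        ((fderiv ℝ f p).prod (fderiv ℝ g p))) p :=
    by have h0 := (isBBM_mul (a := a) (b := b) (c := c)).hasFDerivAt (f p, g p); exact HasFDerivAt.comp p h0 ((hf.hasFDerivAt).prodMk (hg.hasFDerivAt))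
  erw [h.fderiv]
  exact add_comm _ _

theorem Differentiable.entry {f : ℝ × ℝ → Matrix a b ℝ} (hf : Differentiable ℝ f)
    (i : a) (j : b) : Differentiable ℝ fun p => f p i j := by
  have h := (LinearMap.toContinuousLinearMap
      (Matrix.entryLinearMap ℝ ℝ i j : Matrix a b ℝ →ₗ[ℝ] ℝ)).differentiable.comp hf
  exact h

theorem Differentiable.mdet [DecidableEq a] {W : ℝ × ℝ → Matrix a a ℝ}
    (hW : ∀ i j, Differentiable ℝ fun p => W p i j) :
    Differentiable ℝ fun p => (W p).det := by
  simp only [Matrix.det_apply']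
  intro p
  refine DifferentiableAt.fun_sum fun σ _ => DifferentiableAt.const_mul ?_ _
  exact (HasFDerivAt.finset_prod fun i _ => ((hW (σ i) i) p).hasFDerivAt).differentiableAt

theorem differentiable_matinv [DecidableEq a] {X : ℝ × ℝ → Matrix a a ℝ}
    (hX : Differentiable ℝ X) (hXinv : ∀ p, IsUnit (X p)) :
    Differentiable ℝ fun p => (X p)⁻¹ := by
  have hdet : Differentiable ℝ fun p => (X p).det := Differentiable.mdet fun i j => hX.entry i j
  have hdet0 : ∀ p, (X p).det ≠ 0 := by
    intro p
    exact IsUnit.ne_zero ((Matrix.isUnit_iff_isUnit_det (X p)).mp (hXinv p))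
  have hadj : ∀ i j, Differentiable ℝ fun p => (X p).adjugate i j := by
    intro i j
    simp only [Matrix.adjugate_apply]
    apply Differentiable.mdet
    intro k l
    simp only [Matrix.updateRow_apply]
    by_cases h : k = j <;> simp [h, differentiable_const, hX.entry]
  have : Differentiable ℝ fun p => ((X p).det)⁻¹ • (X p).adjugate := by
    apply Differentiable.smul (hdet.inv hdet0)
    refine differentiable_pi.mpr ?_
    intro i
    refine differentiable_pi.mpr ?_
    intro j
    exact hadj i j
  simpa only [Matrix.inv_def, Ring.inverse_eq_inv'] using this

end helpers

/-- `R = 0` specialization of the Riccati construction: if `X_x = Q Y` and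
`X`, `Y` solve the heat equation, then `φ = Y X⁻¹` solves the Burgers equation
with product `Q`: `φ_y = φ_xx + 2 φ_x Q φ`. -/
theorem burgers_of_riccati (M N : ℕ)
    (Q : Matrix (Fin N) (Fin M) ℝ)
    (X : ℝ × ℝ → Matrix (Fin N) (Fin N) ℝ)
    (Y : ℝ × ℝ → Matrix (Fin M) (Fin N) ℝ)
    (hX : ContDiff ℝ (⊤ : ℕ∞) X) (hY : ContDiff ℝ (⊤ : ℕ∞) Y)
    (hXinv : ∀ p, IsUnit (X p))
    (hX1 : ∀ p, pdx X p = Q * Y p)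
    (hX2 : ∀ p, pdy X p = pdx (pdx X) p)
    (hY2 : ∀ p, pdy Y p = pdx (pdx Y) p)
    (φ : ℝ × ℝ → Matrix (Fin M) (Fin N) ℝ)
    (hφ : ∀ p, φ p = Y p * (X p)⁻¹) :
    ∀ p, pdy φ p = pdx (pdx φ) p + 2 • (pdx φ p * Q * φ p) := by
  intro p
  set Z : ℝ × ℝ → Matrix (Fin N) (Fin N) ℝ := fun q => (X q)⁻¹ with hZdef
  have hXd : Differentiable ℝ X := hX.differentiable (by simp)
  have hYd : Differentiable ℝ Y := hY.differentiable (by simp)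
  have hZd : Differentiable ℝ Z := differentiable_matinv hXd hXinv
  have hYx : Differentiable ℝ (pdx Y) :=
    ((hY.fderiv_right (m := (⊤ : ℕ∞)) (by exact_mod_cast le_top)).clm_apply contDiff_const).differentiable (by simp)
  have hφf : φ = fun q => Y q * Z q := funext hφ
  have hdet0 : ∀ q, IsUnit (X q).det := fun q => (Matrix.isUnit_iff_isUnit_det (X q)).mp (hXinv q)
  have hZX : ∀ q, Z q * X q = 1 := fun q => Matrix.nonsing_inv_mul (X q) (hdet0 q)
  have hXZ : ∀ q, X q * Z q = 1 := fun q => Matrix.mul_nonsing_inv (X q) (hdet0 q)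
  -- derivative of the inverse
  have hZder : ∀ q v, fderiv ℝ Z q v = -(Z q * fderiv ℝ X q v * Z q) := by
    intro q v
    have h1 : (fun r => Z r * X r) = fun _ : ℝ × ℝ => (1 : Matrix (Fin N) (Fin N) ℝ) :=
      funext hZX
    have h2 : fderiv ℝ (fun r => Z r * X r) q v = 0 := by
      rw [h1, fderiv_fun_const]; simp
    rw [pd_mul (hZd q) (hXd q) v] at h2
    have h3 := congrArg (fun W => W * Z q) h2
    simp only [Matrix.add_mul, Matrix.zero_mul, Matrix.mul_assoc, hXZ q, Matrix.mul_one] at h3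
    have h4 := eq_neg_of_add_eq_zero_left h3
    rw [h4, Matrix.mul_assoc]
  -- pdx X = Q Y as functions
  have hXxf : pdx X = fun q => Q * Y q := funext hX1
  -- second x-derivative of X
  have hXxx : ∀ q, pdx (pdx X) q = Q * pdx Y q := by
    intro q
    show fderiv ℝ (pdx X) q (1, 0) = _
    rw [hXxf, pd_mul (differentiableAt_const Q) (hYd q) (1, 0)]
    simp [fderiv_fun_const, pdx]
    rfl
  -- first x-derivative of φ
  have hφx : pdx φ = fun q => pdx Y q * Z q - Y q * (Z q * (Q * Y q) * Z q) := by
    funext q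
    show fderiv ℝ φ q (1, 0) = _
    rw [hφf, pd_mul (hYd q) (hZd q) (1, 0), hZder q (1, 0)]
    have : fderiv ℝ X q (1, 0) = Q * Y q := hX1 q
    rw [this, Matrix.mul_neg, ← sub_eq_add_neg]
    rfl
  -- differentiability of the pieces
  have dQY : DifferentiableAt ℝ (fun q => Q * Y q) p :=
    (differentiableAt_const Q).matmul (hYd p)
  have dZQY : DifferentiableAt ℝ (fun q => Z q * (Q * Y q)) p := (hZd p).matmul dQY
  have dZQYZ : DifferentiableAt ℝ (fun q => Z q * (Q * Y q) * Z q) p := dZQY.matmul (hZd p)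
  -- second x-derivative of φ
  have hφxx : pdx (pdx φ) p =
      pdx (pdx Y) p * Z p + pdx Y p * fderiv ℝ Z p (1, 0)
        - (pdx Y p * (Z p * (Q * Y p) * Z p)
          + Y p * ((fderiv ℝ Z p (1, 0) * (Q * Y p) + Z p * (Q * pdx Y p)) * Z p
            + Z p * (Q * Y p) * fderiv ℝ Z p (1, 0))) := by
    show fderiv ℝ (pdx φ) p (1, 0) = _
    rw [hφx]
    rw [show fderiv ℝ (fun q => pdx Y q * Z q - Y q * (Z q * (Q * Y q) * Z q)) p (1, 0)
        = fderiv ℝ (fun q => pdx Y q * Z q) p (1, 0)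
          - fderiv ℝ (fun q => Y q * (Z q * (Q * Y q) * Z q)) p (1, 0) from by
      erw [fderiv_fun_sub ((hYx p).matmul (hZd p)) ((hYd p).matmul dZQYZ)]; rfl]
    rw [pd_mul (hYx p) (hZd p) (1, 0), pd_mul (hYd p) dZQYZ (1, 0),
      pd_mul dZQY (hZd p) (1, 0), pd_mul (hZd p) dQY (1, 0),
      pd_mul (differentiableAt_const Q) (hYd p) (1, 0)]
    simp only [fderiv_fun_const, Pi.zero_apply, ContinuousLinearMap.zero_apply,
      Matrix.zero_mul, zero_add]
    rfl
  -- y-derivative of φ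
  have hφy : pdy φ p = pdx (pdx Y) p * Z p - Y p * (Z p * (Q * pdx Y p) * Z p) := by
    show fderiv ℝ φ p (0, 1) = _
    rw [hφf, pd_mul (hYd p) (hZd p) (0, 1), hZder p (0, 1)]
    have h1 : fderiv ℝ X p (0, 1) = Q * pdx Y p := by
      have := hX2 p
      rw [hXxx p] at this
      exact this
    have h2 : fderiv ℝ Y p (0, 1) = pdx (pdx Y) p := hY2 p
    rw [h1, h2, Matrix.mul_neg, ← sub_eq_add_neg]
  -- assemble
  have hXp : fderiv ℝ X p (1, 0) = Q * Y p := hX1 p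
  rw [hφy, hφxx, hZder p (1, 0), hXp]
  have hφp : φ p = Y p * Z p := hφ p
  have hφxp : pdx φ p = pdx Y p * Z p - Y p * (Z p * (Q * Y p) * Z p) := by rw [hφx]
  rw [hφp, hφxp]
  set A := Y p
  set B := pdx Y p
  set C := pdx (pdx Y) p
  set W := Z p
  simp only [two_smul, Matrix.mul_assoc, Matrix.mul_sub, Matrix.sub_mul, Matrix.mul_add,
    Matrix.add_mul, Matrix.mul_neg, Matrix.neg_mul, Matrix.mul_one, Matrix.one_mul]
  abel
end

section
/- Let R (N×N), Q (N×M), S (M×N) be constant real matrices. Let X : ℝ² → (N×N real matrices) be infinitely differentiable with X(x,y) invertible for all (x,y), and Y : ℝ² → (M×N real matrices) infinitely differentiable, satisfying X_x = R·X + Q·Y, Y_x = S·X, X_y = X_xx and Y_y = Y_xx. Then φ := Y·X⁻¹ satisfies the opposite Burgers equation with product Q: φ_y = −φ_xx − 2 φ Q φ_x. -/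
attribute [local instance] Matrix.normedAddCommGroup Matrix.normedSpace


namespace BurgersAux

variable {a b c : ℕ}

/-- Matrix multiplication as a continuous bilinear map. -/
noncomputable def mulCLM (a b c : ℕ) :
    Matrix (Fin a) (Fin b) ℝ →L[ℝ] Matrix (Fin b) (Fin c) ℝ →L[ℝ] Matrix (Fin a) (Fin c) ℝ :=
  LinearMap.toContinuousLinearMap
  { toFun := fun A => LinearMap.toContinuousLinearMap
      { toFun := fun B => A * B
        map_add' := fun B C => Matrix.mul_add A B C
        map_smul' := fun r B => (Matrix.mul_smul A r B) }
    map_add' := by intro A B; ext C i j; simp [Matrix.add_mul]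
    map_smul' := by intro r A; ext C i j; simp [Matrix.smul_mul] }

@[simp] theorem mulCLM_apply (A : Matrix (Fin a) (Fin b) ℝ) (B : Matrix (Fin b) (Fin c) ℝ) :
    mulCLM a b c A B = A * B := rfl

end BurgersAux
namespace BurgersAux

theorem pdv_mul {f : ℝ × ℝ → Matrix (Fin a) (Fin b) ℝ} {g : ℝ × ℝ → Matrix (Fin b) (Fin c) ℝ}
    {p : ℝ × ℝ} (hf : DifferentiableAt ℝ f p) (hg : DifferentiableAt ℝ g p) (v : ℝ × ℝ) :
    fderiv ℝ (fun q => f q * g q) p v = fderiv ℝ f p v * g p + f p * fderiv ℝ g p v := by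
  have h := ((mulCLM a b c).hasFDerivAt_of_bilinear hf.hasFDerivAt hg.hasFDerivAt).fderiv
  have : fderiv ℝ (fun q => mulCLM a b c (f q) (g q)) p v
      = f p * fderiv ℝ g p v + fderiv ℝ f p v * g p := by
    erw [h]
    simp [ContinuousLinearMap.precompR, ContinuousLinearMap.precompL]
    rfl
  simpa [add_comm] using this

theorem contDiff_mul' {f : ℝ × ℝ → Matrix (Fin a) (Fin b) ℝ} {g : ℝ × ℝ → Matrix (Fin b) (Fin c) ℝ}
    (hf : ContDiff ℝ (⊤ : ℕ∞) f) (hg : ContDiff ℝ (⊤ : ℕ∞) g) :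
    ContDiff ℝ (⊤ : ℕ∞) (fun q => f q * g q) := by
  have := ((mulCLM a b c).isBoundedBilinearMap.contDiff (n := (⊤ : ℕ∞))).comp (hf.prodMk hg)
  exact this

end BurgersAux
namespace BurgersAux

theorem contDiff_entry {f : ℝ × ℝ → Matrix (Fin a) (Fin b) ℝ}
    (hf : ContDiff ℝ (⊤ : ℕ∞) f) (i : Fin a) (j : Fin b) :
    ContDiff ℝ (⊤ : ℕ∞) (fun p => f p i j) := by
  have hf' : ContDiff ℝ (⊤ : ℕ∞) (fun p (i : Fin a) (j : Fin b) => f p i j) := hf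
  exact contDiff_pi.1 (contDiff_pi.1 hf' i) j

theorem contDiff_entrywise {f : ℝ × ℝ → Matrix (Fin a) (Fin b) ℝ}
    (hf : ∀ i j, ContDiff ℝ (⊤ : ℕ∞) (fun p => f p i j)) :
    ContDiff ℝ (⊤ : ℕ∞) f := by
  have : ContDiff ℝ (⊤ : ℕ∞) (fun p (i : Fin a) (j : Fin b) => f p i j) :=
    contDiff_pi.2 fun i => contDiff_pi.2 fun j => hf i j
  exact this

theorem contDiff_finset_prod {ι : Type*} {g : ℝ × ℝ → ι → ℝ} (s : Finset ι)
    (hg : ∀ i ∈ s, ContDiff ℝ (⊤ : ℕ∞) (fun p => g p i)) :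
    ContDiff ℝ (⊤ : ℕ∞) (fun p => ∏ i ∈ s, g p i) := by
  classical
  induction s using Finset.induction with
  | empty => simpa using contDiff_const
  | insert x s' hx ih =>
    simp only [Finset.prod_insert hx]
    exact (hg x (Finset.mem_insert_self x s')).mul
      (ih fun i hi => hg i (Finset.mem_insert_of_mem hi))

theorem contDiff_det {f : ℝ × ℝ → Matrix (Fin a) (Fin a) ℝ}
    (hf : ∀ i j, ContDiff ℝ (⊤ : ℕ∞) (fun p => f p i j)) :
    ContDiff ℝ (⊤ : ℕ∞) (fun p => (f p).det) := by
  simp only [Matrix.det_apply']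
  exact ContDiff.sum fun σ _ => contDiff_const.mul
    (contDiff_finset_prod _ fun i _ => hf (σ i) i)

theorem contDiff_inv' {f : ℝ × ℝ → Matrix (Fin a) (Fin a) ℝ}
    (hf : ContDiff ℝ (⊤ : ℕ∞) f) (hinv : ∀ p, IsUnit (f p)) :
    ContDiff ℝ (⊤ : ℕ∞) (fun p => (f p)⁻¹) := by
  have hdet : ContDiff ℝ (⊤ : ℕ∞) (fun p => (f p).det) :=
    contDiff_det (contDiff_entry hf)
  have hdet0 : ∀ p, (f p).det ≠ 0 := fun p =>
    ((Matrix.isUnit_iff_isUnit_det (f p)).1 (hinv p)).ne_zero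
  have hadj : ContDiff ℝ (⊤ : ℕ∞) (fun p => (f p).adjugate) := by
    refine contDiff_entrywise fun i j => ?_
    have : ∀ p, (f p).adjugate i j = ((f p).updateRow j (Pi.single i 1)).det := fun p =>
      Matrix.adjugate_apply _ i j
    simp only [this]
    refine contDiff_det fun k l => ?_
    rcases eq_or_ne k j with rfl | hk
    · simp only [Matrix.updateRow_self]
      exact contDiff_const
    · simp only [Matrix.updateRow_ne hk]
      exact contDiff_entry hf k l
  have h := (hdet.inv hdet0).smul hadj
  have heq : (fun p => (f p)⁻¹) = fun p => ((f p).det)⁻¹ • (f p).adjugate := by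
    funext p
    rw [Matrix.inv_def, Ring.inverse_eq_inv']
  rw [heq]
  exact h

theorem contDiff_pdx_s16 {E : Type*} [NormedAddCommGroup E] [NormedSpace ℝ E]
    {f : ℝ × ℝ → E} (hf : ContDiff ℝ (⊤ : ℕ∞) f) : ContDiff ℝ (⊤ : ℕ∞) (pdx f) :=
  (hf.fderiv_right (by exact_mod_cast le_top)).clm_apply contDiff_const

end BurgersAux
namespace BurgersAux

theorem pdv_add {E : Type*} [NormedAddCommGroup E] [NormedSpace ℝ E]
    {f g : ℝ × ℝ → E} {p : ℝ × ℝ} (hf : DifferentiableAt ℝ f p)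
    (hg : DifferentiableAt ℝ g p) (v : ℝ × ℝ) :
    fderiv ℝ (fun q => f q + g q) p v = fderiv ℝ f p v + fderiv ℝ g p v := by
  rw [fderiv_fun_add hf hg]; rfl

theorem pdv_sub {E : Type*} [NormedAddCommGroup E] [NormedSpace ℝ E]
    {f g : ℝ × ℝ → E} {p : ℝ × ℝ} (hf : DifferentiableAt ℝ f p)
    (hg : DifferentiableAt ℝ g p) (v : ℝ × ℝ) :
    fderiv ℝ (fun q => f q - g q) p v = fderiv ℝ f p v - fderiv ℝ g p v := by
  rw [fderiv_fun_sub hf hg]; rfl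

theorem pdv_constL {g : ℝ × ℝ → Matrix (Fin b) (Fin c) ℝ} {p : ℝ × ℝ}
    (C : Matrix (Fin a) (Fin b) ℝ) (hg : DifferentiableAt ℝ g p) (v : ℝ × ℝ) :
    fderiv ℝ (fun q => C * g q) p v = C * fderiv ℝ g p v := by
  have := pdv_mul (f := fun _ => C) (differentiableAt_const C) hg v
  simpa using this

theorem pdv_constR {f : ℝ × ℝ → Matrix (Fin a) (Fin b) ℝ} {p : ℝ × ℝ}
    (C : Matrix (Fin b) (Fin c) ℝ) (hf : DifferentiableAt ℝ f p) (v : ℝ × ℝ) :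
    fderiv ℝ (fun q => f q * C) p v = fderiv ℝ f p v * C := by
  have := pdv_mul (g := fun _ => C) hf (differentiableAt_const C) v
  simpa using this

end BurgersAux
namespace BurgersAux
theorem diff_of_contDiff {E F : Type*} [NormedAddCommGroup E] [NormedSpace ℝ E]
    [NormedAddCommGroup F] [NormedSpace ℝ F] {f : E → F}
    (hf : ContDiff ℝ (⊤ : ℕ∞) f) : Differentiable ℝ f :=
  hf.differentiable (by simp)
end BurgersAux

open BurgersAux in
/-- `L = 0` specialization of the Riccati construction: if `X_x = R X + Q Y`,
`Y_x = S X`, and `X`, `Y` solve the heat equation, then `φ = Y X⁻¹` solves the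
opposite Burgers equation with product `Q`: `φ_y = -φ_xx - 2 φ Q φ_x`. -/
theorem opposite_burgers_of_riccati (M N : ℕ)
    (R : Matrix (Fin N) (Fin N) ℝ) (Q : Matrix (Fin N) (Fin M) ℝ)
    (S : Matrix (Fin M) (Fin N) ℝ)
    (X : ℝ × ℝ → Matrix (Fin N) (Fin N) ℝ)
    (Y : ℝ × ℝ → Matrix (Fin M) (Fin N) ℝ)
    (hX : ContDiff ℝ (⊤ : ℕ∞) X) (hY : ContDiff ℝ (⊤ : ℕ∞) Y)
    (hXinv : ∀ p, IsUnit (X p))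
    (hX1 : ∀ p, pdx X p = R * X p + Q * Y p)
    (hY1 : ∀ p, pdx Y p = S * X p)
    (hX2 : ∀ p, pdy X p = pdx (pdx X) p)
    (hY2 : ∀ p, pdy Y p = pdx (pdx Y) p)
    (φ : ℝ × ℝ → Matrix (Fin M) (Fin N) ℝ)
    (hφ : ∀ p, φ p = Y p * (X p)⁻¹) :
    ∀ p, pdy φ p = - pdx (pdx φ) p - 2 • (φ p * Q * pdx φ p) := by
  classical
  have hdet0 : ∀ p, IsUnit (X p).det := fun p => (Matrix.isUnit_iff_isUnit_det _).1 (hXinv p)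
  have hXi : ContDiff ℝ (⊤ : ℕ∞) (fun p => (X p)⁻¹) := contDiff_inv' hX hXinv
  have hφc : ContDiff ℝ (⊤ : ℕ∞) φ := by
    have : φ = fun p => Y p * (X p)⁻¹ := funext hφ
    rw [this]; exact contDiff_mul' hY hXi
  have hcancel : ∀ (p) (A B : Matrix (Fin M) (Fin N) ℝ), A * X p = B * X p → A = B := by
    intro p A B h
    have h2 := congrArg (fun Z => Z * (X p)⁻¹) h
    simpa [Matrix.mul_assoc, Matrix.mul_nonsing_inv _ (hdet0 p)] using h2
  have hYφX : Y = fun p => φ p * X p := by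
    funext p
    rw [hφ p, Matrix.mul_assoc, Matrix.nonsing_inv_mul _ (hdet0 p), Matrix.mul_one]
  have hφd : Differentiable ℝ φ := diff_of_contDiff hφc
  have hXd : Differentiable ℝ X := diff_of_contDiff hX
  have hφxc : ContDiff ℝ (⊤ : ℕ∞) (pdx φ) := contDiff_pdx_s16 hφc
  have hXxc : ContDiff ℝ (⊤ : ℕ∞) (pdx X) := contDiff_pdx_s16 hX
  have hdY : ∀ p v, fderiv ℝ Y p v = fderiv ℝ φ p v * X p + φ p * fderiv ℝ X p v := by
    intro p v
    rw [hYφX]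
    exact pdv_mul (hφd p) (hXd p) v
  have hdxY : pdx Y = fun q => pdx φ q * X q + φ q * pdx X q := funext fun p => hdY p (1, 0)
  have hXx : ∀ p, pdx X p = (R + Q * φ p) * X p := by
    intro p
    rw [hX1 p, hYφX]
    simp [Matrix.add_mul, Matrix.mul_assoc]
  have hφx : ∀ p, pdx φ p = S - φ p * R - φ p * Q * φ p := by
    intro p
    apply hcancel p
    have h1 : S * X p = pdx φ p * X p + φ p * ((R + Q * φ p) * X p) := by
      rw [← hY1 p, hdxY, ← hXx p]
    simp only [Matrix.sub_mul, Matrix.add_mul, Matrix.mul_add, Matrix.mul_assoc] at h1 ⊢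
    rw [h1]
    abel
  have hφQc : ContDiff ℝ (⊤ : ℕ∞) (fun q => φ q * Q) := contDiff_mul' hφc contDiff_const
  have hφxx : ∀ p, pdx (pdx φ) p
      = -(pdx φ p * R) - (pdx φ p * Q * φ p + φ p * Q * pdx φ p) := by
    intro p
    have hfun : pdx φ = fun q => S - φ q * R - φ q * Q * φ q := funext hφx
    have key : fderiv ℝ (fun q => S - φ q * R - φ q * Q * φ q) p (1, 0)
        = -(fderiv ℝ φ p (1, 0) * R)
          - (fderiv ℝ φ p (1, 0) * Q * φ p + φ p * Q * fderiv ℝ φ p (1, 0)) := by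
      have h3 : fderiv ℝ (fun q => φ q * Q * φ q) p (1, 0)
          = fderiv ℝ φ p (1, 0) * Q * φ p + φ p * Q * fderiv ℝ φ p (1, 0) := by
        have h4 := pdv_mul (f := fun q => φ q * Q) (g := φ)
          (diff_of_contDiff hφQc p) (hφd p) (1, 0)
        rw [h4, pdv_constR Q (hφd p)]
      erw [pdv_sub ((differentiableAt_const S).fun_sub (diff_of_contDiff
          (contDiff_mul' hφc contDiff_const) p)) (diff_of_contDiff
          (contDiff_mul' hφQc hφc) p),
        pdv_sub (differentiableAt_const S) (diff_of_contDiff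
          (contDiff_mul' hφc contDiff_const) p), fderiv_const,
        pdv_constR R (hφd p), h3]
      simp
    calc pdx (pdx φ) p = pdx (fun q => S - φ q * R - φ q * Q * φ q) p := by rw [hfun]
    _ = -(pdx φ p * R) - (pdx φ p * Q * φ p + φ p * Q * pdx φ p) := key
  have hYxx : ∀ p, pdx (pdx Y) p = pdx (pdx φ) p * X p + pdx φ p * pdx X p
      + (pdx φ p * pdx X p + φ p * pdx (pdx X) p) := by
    intro p
    have key : fderiv ℝ (fun q => pdx φ q * X q + φ q * pdx X q) p (1, 0)
        = fderiv ℝ (pdx φ) p (1, 0) * X p + pdx φ p * fderiv ℝ X p (1, 0)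
          + (fderiv ℝ φ p (1, 0) * pdx X p + φ p * fderiv ℝ (pdx X) p (1, 0)) := by
      erw [pdv_add (diff_of_contDiff (contDiff_mul' hφxc hX) p)
        (diff_of_contDiff (contDiff_mul' hφc hXxc) p),
        pdv_mul (diff_of_contDiff hφxc p) (hXd p),
        pdv_mul (hφd p) (diff_of_contDiff hXxc p)]
    calc pdx (pdx Y) p = pdx (fun q => pdx φ q * X q + φ q * pdx X q) p := by rw [hdxY]
    _ = _ := key
  intro p
  apply hcancel p
  have e1 : pdy Y p = pdy φ p * X p + φ p * pdy X p := hdY p (0, 1)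
  have e2 : pdy φ p * X p
      = pdx (pdx φ) p * X p + (pdx φ p * pdx X p + pdx φ p * pdx X p) := by
    have h := hYxx p
    rw [← hY2 p, e1, hX2 p] at h
    apply add_right_cancel (b := φ p * pdx (pdx X) p)
    rw [h]
    abel
  have e3 : pdx φ p * (R + Q * φ p) = -pdx (pdx φ) p - φ p * Q * pdx φ p := by
    rw [hφxx p]
    simp only [Matrix.mul_add, Matrix.mul_assoc, neg_sub, sub_add_eq_sub_sub, neg_neg]
    abel
  rw [hXx p, show pdx φ p * ((R + Q * φ p) * X p)
      = (pdx φ p * (R + Q * φ p)) * X p from (Matrix.mul_assoc _ _ _).symm, e3] at e2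
  rw [e2]
  simp only [Matrix.sub_mul, Matrix.neg_mul, Matrix.add_mul, Matrix.smul_mul]
  abel
end
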